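/- Let f : ℝ → ℝ be three times differentiable on (0,∞) with f'(u) ≠ 0 and f''(u) ≠ 0 for all u > 0, and set B(u) = (1/(2f''(u)))·((f'(u) + u f''(u))/(u f'(u)) − f'''(u)/f''(u)). Suppose there exist λ, μ ∈ ℝ such that B(u) − 1/f'(u) = λ u and B(u) f'(u) + 1 = μ f(u) for all u > 0. Then λ ≠ 0, μ = 0, and there exists c ∈ ℝ such that f(u) = −(2/λ) ln u + c for all u > 0. -/

import Mathlib

/-- The auxiliary function
`B(u) = (1/(2f''(u)))·((f'(u) + u f''(u))/(u f'(u)) − f'''(u)/f''(u))`. -/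
noncomputable def Bfun (f : ℝ → ℝ) (u : ℝ) : ℝ :=
  (1 / (2 * deriv (deriv f) u)) *
    ((deriv f u + u * deriv (deriv f) u) / (u * deriv f u) -
      deriv (deriv (deriv f)) u / deriv (deriv f) u)

/-- If `f` is three times differentiable on `(0,∞)` with `f' ≠ 0`, `f'' ≠ 0`, and there
are `λ, μ` with `B(u) − 1/f'(u) = λu` and `B(u) f'(u) + 1 = μ f(u)` on `(0,∞)` (i.e. the
coordinate functions of the surface of revolution are `Δ^{II}`-eigenfunctions with
eigenvalues `λ, λ, μ`), then `λ ≠ 0`, `μ = 0`, and `f(u) = −(2/λ) ln u + c`. -/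
theorem lapII_eigen_classification
    (f : ℝ → ℝ)
    (hf : ∀ u ∈ Set.Ioi (0 : ℝ), DifferentiableAt ℝ f u)
    (hf' : ∀ u ∈ Set.Ioi (0 : ℝ), DifferentiableAt ℝ (deriv f) u)
    (hf'' : ∀ u ∈ Set.Ioi (0 : ℝ), DifferentiableAt ℝ (deriv (deriv f)) u)
    (h1 : ∀ u ∈ Set.Ioi (0 : ℝ), deriv f u ≠ 0)
    (h2 : ∀ u ∈ Set.Ioi (0 : ℝ), deriv (deriv f) u ≠ 0)
    (lam mu : ℝ)
    (hA : ∀ u ∈ Set.Ioi (0 : ℝ), Bfun f u - 1 / deriv f u = lam * u)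
    (hB : ∀ u ∈ Set.Ioi (0 : ℝ), Bfun f u * deriv f u + 1 = mu * f u) :
    lam ≠ 0 ∧ mu = 0 ∧
    ∃ c : ℝ, ∀ u ∈ Set.Ioi (0 : ℝ), f u = -(2 / lam) * Real.log u + c := by
  set g := deriv f with hg
  -- Step 1: combined equation  lam*u*g(u) + 2 = mu * f(u)  on Ioi 0
  have E2 : ∀ u ∈ Set.Ioi (0 : ℝ), lam * u * g u + 2 = mu * f u := by
    intro u hu
    have hA' := hA u hu
    have hB' := hB u hu
    have hgne := h1 u hu
    have : Bfun f u = lam * u + 1 / g u := by linarith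
    rw [this] at hB'
    field_simp at hB'
    linarith
  -- Step 2: differentiate E2 on the open set
  have E3 : ∀ u ∈ Set.Ioi (0 : ℝ), lam * g u + lam * u * deriv g u = mu * g u := by
    intro u hu
    have hmem : Set.Ioi (0:ℝ) ∈ nhds u := isOpen_Ioi.mem_nhds hu
    have heq : (fun x => lam * x * g x + 2) =ᶠ[nhds u] fun x => mu * f x :=
      Filter.eventuallyEq_of_mem hmem (fun x hx => E2 x hx)
    have hL : HasDerivAt (fun x => lam * x * g x + 2)
        (lam * g u + lam * u * deriv g u) u := by
      have := (((hasDerivAt_id u).const_mul lam).fun_mul (hf' u hu).hasDerivAt).add_const 2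
      refine this.congr_deriv ?_
      simp only [id]
      ring
    have hR : deriv (fun x => mu * f x) u = mu * g u := by
      rw [deriv_const_mul mu (hf u hu)]
    rw [← heq.deriv_eq, hL.deriv] at hR
    exact hR
  -- lam ≠ 0
  have hlam : lam ≠ 0 := by
    intro h0
    have e2 := E2 1 (by norm_num)
    have e3 := E3 1 (by norm_num)
    have hg1 := h1 1 (by norm_num)
    rw [h0] at e2 e3
    simp at e3
    rcases e3 with e3 | e3
    · rw [e3] at e2; simp at e2
    · exact hg1 e3
  -- k and the first-order relation  u * g'(u) = k * g(u)
  set k : ℝ := (mu - lam) / lam with hk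
  have hmu : mu = lam * (k + 1) := by rw [hk, mul_add, mul_div_cancel₀ (mu - lam) hlam]; ring
  have E4 : ∀ u ∈ Set.Ioi (0 : ℝ), u * deriv g u = k * g u := by
    intro u hu
    have e3 := E3 u hu
    rw [hmu] at e3
    have hu0 : (u:ℝ) ≠ 0 := ne_of_gt hu
    field_simp [hk] at e3 ⊢
    nlinarith [e3]
  -- differentiate E4:  u * g''(u) = (k-1) * g'(u)
  have E5 : ∀ u ∈ Set.Ioi (0 : ℝ), u * deriv (deriv g) u = (k - 1) * deriv g u := by
    intro u hu
    have hmem : Set.Ioi (0:ℝ) ∈ nhds u := isOpen_Ioi.mem_nhds hu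
    have heq : (fun x => x * deriv g x) =ᶠ[nhds u] fun x => k * g x :=
      Filter.eventuallyEq_of_mem hmem (fun x hx => E4 x hx)
    have hL : HasDerivAt (fun x => x * deriv g x)
        (deriv g u + u * deriv (deriv g) u) u := by
      have := (hasDerivAt_id u).fun_mul (hf'' u hu).hasDerivAt
      refine this.congr_deriv ?_
      simp only [id]
      ring
    have hR : deriv (fun x => k * g x) u = k * deriv g u := by
      rw [deriv_const_mul k (hf' u hu)]
    rw [← heq.deriv_eq, hL.deriv] at hR
    have := E4 u hu
    nlinarith [hR]
  -- pointwise algebra with the first eigenvalue equation:  1 - k = lam * k * u * g u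
  have hk0 : k ≠ 0 := by
    intro h0
    have e4 := E4 1 (by norm_num)
    rw [h0] at e4
    simp at e4
    exact h2 1 (by norm_num) e4
  have E6 : ∀ u ∈ Set.Ioi (0 : ℝ), 1 - k = lam * k * u * g u := by
    intro u hu
    have hu0 : (u:ℝ) ≠ 0 := ne_of_gt hu
    have hA' := hA u hu
    have ha := h1 u hu
    have hb := h2 u hu
    have e4 := E4 u hu
    have e5 := E5 u hu
    unfold Bfun at hA'
    rw [← hg] at hA'
    -- substitute u*g' = k*g and u*g'' = (k-1)*g'
    have hgd : deriv g u = k * g u / u := by field_simp [e4]; linarith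
    have hgdd : deriv (deriv g) u = (k - 1) * deriv g u / u := by
      field_simp; linarith
    rw [hgd, hgdd, hgd] at hA'
    field_simp at hA'
    have key : 2 * k * u ^ 3 * (g u) ^ 3 * (1 - k - lam * k * u * g u) = 0 := by
      linear_combination (k * u ^ 3 * (g u) ^ 3) * hA'
    have hfac : 2 * k * u ^ 3 * (g u) ^ 3 ≠ 0 := by
      apply mul_ne_zero (mul_ne_zero (mul_ne_zero two_ne_zero hk0) (pow_ne_zero 3 hu0))
        (pow_ne_zero 3 ha)
    have := (mul_eq_zero.mp key).resolve_left hfac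
    linarith
  -- so g(u) = C / u with C = (1-k)/(lam*k)
  have hkne1 : k ≠ 1 := by
    intro h0
    have e6 := E6 1 (by norm_num)
    rw [h0] at e6
    have hz : lam * g 1 = 0 := by linear_combination -e6
    exact mul_ne_zero hlam (h1 1 (by norm_num)) hz
  set C : ℝ := (1 - k) / (lam * k) with hC
  have hCne : C ≠ 0 := by
    apply div_ne_zero (sub_ne_zero.mpr (Ne.symm hkne1)) (mul_ne_zero hlam hk0)
  have E7 : ∀ u ∈ Set.Ioi (0 : ℝ), g u = C / u := by
    intro u hu
    have hu0 : (u:ℝ) ≠ 0 := ne_of_gt hu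
    have e6 := E6 u hu
    rw [hC]
    field_simp
    linarith [e6]
  -- differentiate E7 and compare to E4: k = -1
  have hkm1 : k = -1 := by
    have hu1 : (1:ℝ) ∈ Set.Ioi (0:ℝ) := by norm_num
    have hmem : Set.Ioi (0:ℝ) ∈ nhds (1:ℝ) := isOpen_Ioi.mem_nhds hu1
    have heq : g =ᶠ[nhds (1:ℝ)] fun x => C / x :=
      Filter.eventuallyEq_of_mem hmem (fun x hx => E7 x hx)
    have hL : HasDerivAt (fun x : ℝ => C / x) (-C) 1 := by
      simpa [div_eq_mul_inv] using (hasDerivAt_inv (one_ne_zero)).const_mul C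
    have hd : deriv g 1 = -C := by rw [heq.deriv_eq, hL.deriv]
    have e4 := E4 1 hu1
    have e7 := E7 1 hu1
    rw [hd, e7] at e4
    have hz : (k + 1) * C = 0 := by linear_combination -e4
    rcases mul_eq_zero.mp hz with hz | hz
    · linarith
    · exact absurd hz hCne
  have hmu0 : mu = 0 := by rw [hmu, hkm1]; ring
  -- g(u) = -2/(lam*u); integrate
  have hCval : C = -(2 / lam) := by
    rw [hC, hkm1]
    rw [show lam * (-1 : ℝ) = -lam by ring, div_neg, neg_inj]
    norm_num
  refine ⟨hlam, hmu0, f 1, ?_⟩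
  intro u hu
  have key : ∀ x ∈ Set.Ioi (0:ℝ), ∀ y ∈ Set.Ioi (0:ℝ),
      f x - C * Real.log x = f y - C * Real.log y := by
    intro x hx y hy
    have hdiff : DifferentiableOn ℝ (fun t => f t - C * Real.log t) (Set.Ioi 0) := by
      intro t ht
      exact (((hf t ht).sub ((Real.differentiableAt_log (ne_of_gt ht)).const_mul C))).differentiableWithinAt
    apply (convex_Ioi (0:ℝ)).is_const_of_fderivWithin_eq_zero hdiff _ hx hy
    intro t ht
    rw [fderivWithin_of_isOpen isOpen_Ioi ht]
    have hder : HasDerivAt (fun t : ℝ => f t - C * Real.log t) (g t - C * t⁻¹) t :=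
      (hf t ht).hasDerivAt.sub ((Real.hasDerivAt_log (ne_of_gt ht)).const_mul C)
    have hz : g t - C * t⁻¹ = 0 := by
      rw [E7 t ht]; field_simp; simp
    rw [hz] at hder
    rw [hder.hasFDerivAt.fderiv]
    ext
    simp
  have := key u hu 1 (by norm_num)
  simp [Real.log_one] at this
  rw [← hCval]
  linarith
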